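/- Let R ⊆ S ⊆ F_2^λ with dim(R) = λ/6, dim(S) = 2λ/6, and let T be a uniformly random superspace of S of dimension 3λ/6 and T_R a uniformly random superspace of R of dimension 3λ/6 (sampled independently given R). Then Pr[T ∩ T_R = R] ≥ 1 - 2^{-λ/6 + 1}. -/

import Mathlib

open Module

section Aux
variable {K V : Type*} [Field K] [AddCommGroup V] [Module K V] [FiniteDimensional K V]

lemma aux_inf_span_eq_bot {U : Submodule K V} {v : V} (hv : v ∉ U) :
    U ⊓ Submodule.span K {v} = ⊥ := by
  rw [eq_bot_iff]
  rintro x ⟨hxU, hxs⟩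
  obtain ⟨c, rfl⟩ := Submodule.mem_span_singleton.mp hxs
  rcases eq_or_ne c 0 with rfl | hc
  · simp
  · exact absurd (by simpa [smul_smul, inv_mul_cancel₀ hc] using U.smul_mem c⁻¹ hxU) hv

lemma aux_finrank_sup_span {U : Submodule K V} {v : V} (hv : v ∉ U) :
    finrank K ↥(U ⊔ Submodule.span K {v}) = finrank K U + 1 := by
  have h := Submodule.finrank_sup_add_finrank_inf_eq U (Submodule.span K {v})
  rw [aux_inf_span_eq_bot hv, finrank_bot,
    finrank_span_singleton (by rintro rfl; exact hv (zero_mem U))] at h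
  omega

lemma aux_exists_superspace (U : Submodule K V) (d : ℕ) (h1 : finrank K U ≤ d)
    (h2 : d ≤ finrank K V) : ∃ T, U ≤ T ∧ finrank K ↥T = d := by
  induction d, h1 using Nat.le_induction with
  | base => exact ⟨U, le_rfl, rfl⟩
  | succ d hd ih =>
    obtain ⟨T, hUT, hT⟩ := ih (by omega)
    have hTlt : T ≠ ⊤ := by
      intro h
      rw [h, finrank_top] at hT
      omega
    obtain ⟨v, hv⟩ : ∃ v, v ∉ T := by
      by_contra h
      push_neg at h
      exact hTlt (Submodule.eq_top_iff'.mpr h)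
    exact ⟨T ⊔ Submodule.span K {v}, hUT.trans le_sup_left, by
      rw [aux_finrank_sup_span hv, hT]⟩

lemma aux_exists_automorphism (U U' : Submodule K V) (h : finrank K U = finrank K U') :
    ∃ e : V ≃ₗ[K] V, U.map (e : V →ₗ[K] V) = U' := by
  obtain ⟨C, hC⟩ := Submodule.exists_isCompl U
  obtain ⟨C', hC'⟩ := Submodule.exists_isCompl U'
  have h1 := Submodule.finrank_add_eq_of_isCompl hC
  have h2 := Submodule.finrank_add_eq_of_isCompl hC'
  obtain ⟨e1⟩ := FiniteDimensional.nonempty_linearEquiv_of_finrank_eq h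
  obtain ⟨e2⟩ := FiniteDimensional.nonempty_linearEquiv_of_finrank_eq
    (show finrank K C = finrank K C' by omega)
  set e : V ≃ₗ[K] V := (Submodule.prodEquivOfIsCompl U C hC).symm ≪≫ₗ (e1.prodCongr e2) ≪≫ₗ
    Submodule.prodEquivOfIsCompl U' C' hC' with he
  have key : ∀ x : U, e ↑x = ↑(e1 x) := by
    intro x
    simp [he, LinearEquiv.trans_apply, Submodule.prodEquivOfIsCompl_symm_apply_left U C hC x,
      LinearEquiv.prodCongr_apply]
  refine ⟨e, le_antisymm ?_ ?_⟩
  · rintro _ ⟨u, hu, rfl⟩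
    simpa using (key ⟨u, hu⟩ ▸ (e1 ⟨u, hu⟩).2)
  · intro y hy
    refine ⟨↑(e1.symm ⟨y, hy⟩), Submodule.coe_mem _, ?_⟩
    rw [LinearEquiv.coe_coe, key (e1.symm ⟨y, hy⟩)]
    simp

lemma aux_card_superspaces_congr (U U' : Submodule K V) (h : finrank K U = finrank K U')
    (d : ℕ) :
    Nat.card {T : Submodule K V // U ≤ T ∧ finrank K ↥T = d} =
      Nat.card {T : Submodule K V // U' ≤ T ∧ finrank K ↥T = d} := by
  obtain ⟨e, he⟩ := aux_exists_automorphism U U' h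
  refine Nat.card_congr (Equiv.subtypeEquiv (Submodule.orderIsoMapComap e).toEquiv ?_)
  intro T
  have h1 : U ≤ T ↔ U' ≤ Submodule.map (e : V →ₗ[K] V) T := by
    rw [← he]
    exact ((Submodule.orderIsoMapComap e).le_iff_le (x := U) (y := T)).symm
  have h2 : finrank K ↥(Submodule.map (e : V →ₗ[K] V) T) = finrank K ↥T := LinearEquiv.finrank_map_eq e T
  constructor
  · rintro ⟨ha, hb⟩; exact ⟨h1.mp ha, by rw [show ((Submodule.orderIsoMapComap e).toEquiv T : Submodule K V) = Submodule.map (e : V →ₗ[K] V) T from rfl, h2, hb]⟩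
  · rintro ⟨ha, hb⟩; exact ⟨h1.mpr ha, by rw [← h2]; exact hb⟩

lemma aux_nat_card_sigma {I : Type*} [Fintype I] {F : I → Type*} [∀ i, Fintype (F i)] :
    Nat.card (Σ i, F i) = ∑ i : I, Nat.card (F i) := by
  simp [Nat.card_eq_fintype_card]

end Aux

set_option maxHeartbeats 4000000 in
set_option synthInstance.maxHeartbeats 400000 in
theorem random_superspaces_intersect_in_R (m : ℕ)
    (R S : Submodule (ZMod 2) (Fin (6 * m) → ZMod 2))
    (hRS : R ≤ S)
    (hR : finrank (ZMod 2) R = m)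
    (hS : finrank (ZMod 2) S = 2 * m) :
    1 - (2 : ℚ) ^ (-(m : ℤ) + 1) ≤
      (Nat.card {p : {T : Submodule (ZMod 2) (Fin (6 * m) → ZMod 2) //
              S ≤ T ∧ finrank (ZMod 2) T = 3 * m} ×
            {T : Submodule (ZMod 2) (Fin (6 * m) → ZMod 2) //
              R ≤ T ∧ finrank (ZMod 2) T = 3 * m} //
          p.1.1 ⊓ p.2.1 = R} : ℚ) /
        ((Nat.card {T : Submodule (ZMod 2) (Fin (6 * m) → ZMod 2) //
            S ≤ T ∧ finrank (ZMod 2) T = 3 * m} : ℚ) *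
         (Nat.card {T : Submodule (ZMod 2) (Fin (6 * m) → ZMod 2) //
            R ≤ T ∧ finrank (ZMod 2) T = 3 * m} : ℚ)) := by
  classical
  haveI : Finite (Submodule (ZMod 2) (Fin (6 * m) → ZMod 2)) :=
    Finite.of_injective (fun T => (T : Set (Fin (6 * m) → ZMod 2))) SetLike.coe_injective
  set G := Nat.card {p : {T : Submodule (ZMod 2) (Fin (6 * m) → ZMod 2) //
              S ≤ T ∧ finrank (ZMod 2) T = 3 * m} ×
            {T : Submodule (ZMod 2) (Fin (6 * m) → ZMod 2) //
              R ≤ T ∧ finrank (ZMod 2) T = 3 * m} //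
          p.1.1 ⊓ p.2.1 = R} with hG
  set nS := Nat.card {T : Submodule (ZMod 2) (Fin (6 * m) → ZMod 2) //
            S ≤ T ∧ finrank (ZMod 2) T = 3 * m} with hnS
  set nR := Nat.card {T : Submodule (ZMod 2) (Fin (6 * m) → ZMod 2) //
            R ≤ T ∧ finrank (ZMod 2) T = 3 * m} with hnR
  rcases Nat.eq_zero_or_pos m with hm0 | hm
  · -- m = 0 : the right-hand side is `-1`, trivial
    subst hm0
    have h1 : (0:ℚ) ≤ (G : ℚ) / ((nS : ℚ) * (nR : ℚ)) := by positivity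
    norm_num
    linarith
  · -- main case `1 ≤ m`
    have hW : finrank (ZMod 2) (Fin (6 * m) → ZMod 2) = 6 * m := by
      simp [Module.finrank_fintype_fun_eq_card]
    haveI : Fintype (Submodule (ZMod 2) (Fin (6 * m) → ZMod 2)) := Fintype.ofFinite _
    have cardSub : ∀ t : Submodule (ZMod 2) (Fin (6 * m) → ZMod 2),
        Nat.card t = 2 ^ finrank (ZMod 2) t := by
      intro t
      haveI : Fintype t := Fintype.ofFinite _
      rw [Nat.card_eq_fintype_card, card_eq_pow_finrank (K := ZMod 2) (V := t), ZMod.card]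
    -- nonemptiness of the two sample spaces
    obtain ⟨T₁, hT₁⟩ := aux_exists_superspace S (3 * m) (by omega) (by omega)
    obtain ⟨T₂, hT₂⟩ := aux_exists_superspace R (3 * m) (by omega) (by omega)
    have hnSpos : 0 < nS := by
      rw [hnS]
      haveI : Nonempty {T : Submodule (ZMod 2) (Fin (6 * m) → ZMod 2) //
          S ≤ T ∧ finrank (ZMod 2) T = 3 * m} := ⟨⟨T₁, hT₁⟩⟩
      exact Nat.card_pos
    have hnRpos : 0 < nR := by
      rw [hnR]
      haveI : Nonempty {T : Submodule (ZMod 2) (Fin (6 * m) → ZMod 2) //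
          R ≤ T ∧ finrank (ZMod 2) T = 3 * m} := ⟨⟨T₂, hT₂⟩⟩
      exact Nat.card_pos
    -- a vector outside `R`
    obtain ⟨v₀, hv₀⟩ : ∃ v, v ∉ R := by
      by_contra h
      push_neg at h
      have : R = ⊤ := Submodule.eq_top_iff'.mpr h
      rw [this, finrank_top, hW] at hR
      omega
    set M := Nat.card {T : Submodule (ZMod 2) (Fin (6 * m) → ZMod 2) //
        R ⊔ Submodule.span (ZMod 2) {v₀} ≤ T ∧ finrank (ZMod 2) T = 3 * m} with hMdef
    -- the number of admissible `T_R` containing a fixed `v ∉ R` equals `M`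
    have fiberM : ∀ v : Fin (6 * m) → ZMod 2, v ∉ R →
        Nat.card {T_R : {T : Submodule (ZMod 2) (Fin (6 * m) → ZMod 2) //
            R ≤ T ∧ finrank (ZMod 2) T = 3 * m} // v ∈ T_R.1} = M := by
      intro v hv
      have e1 : {T_R : {T : Submodule (ZMod 2) (Fin (6 * m) → ZMod 2) //
            R ≤ T ∧ finrank (ZMod 2) T = 3 * m} // v ∈ T_R.1} ≃
          {T : Submodule (ZMod 2) (Fin (6 * m) → ZMod 2) //
            R ⊔ Submodule.span (ZMod 2) {v} ≤ T ∧ finrank (ZMod 2) T = 3 * m} :=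
        (Equiv.subtypeSubtypeEquivSubtypeInter
            (fun T : Submodule (ZMod 2) (Fin (6 * m) → ZMod 2) =>
              R ≤ T ∧ finrank (ZMod 2) T = 3 * m)
            (fun T : Submodule (ZMod 2) (Fin (6 * m) → ZMod 2) => v ∈ T)).trans
          (Equiv.subtypeEquivRight (by
          intro T
          constructor
          · rintro ⟨⟨h1, h2⟩, h3⟩
            exact ⟨sup_le h1 ((Submodule.span_singleton_le_iff_mem v T).mpr h3), h2⟩
          · rintro ⟨h1, h2⟩
            exact ⟨⟨le_trans le_sup_left h1, h2⟩,
              h1 (Submodule.mem_sup_right (Submodule.mem_span_singleton_self v))⟩))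
      rw [Nat.card_congr e1, hMdef]
      exact aux_card_superspaces_congr _ _ (by
        rw [aux_finrank_sup_span hv, aux_finrank_sup_span hv₀]) _
    -- counting elements of a superspace of `R` outside of `R`
    have cardDiffLem : ∀ t : Submodule (ZMod 2) (Fin (6 * m) → ZMod 2), R ≤ t →
        Nat.card {v : Fin (6 * m) → ZMod 2 // v ∈ t ∧ v ∉ R} + 2 ^ m =
          2 ^ finrank (ZMod 2) t := by
      intro t ht
      have h1 : Nat.card {v : Fin (6 * m) → ZMod 2 // v ∈ t ∧ v ∉ R} =
          ((t : Set (Fin (6 * m) → ZMod 2)) \ (R : Set (Fin (6 * m) → ZMod 2))).ncard := by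
        rw [← Nat.card_coe_set_eq]
        exact Nat.card_congr (Equiv.subtypeEquivRight (fun v => by
          simp [Set.mem_diff, SetLike.mem_coe]))
      have h2 : (R : Set (Fin (6 * m) → ZMod 2)).ncard = 2 ^ m := by
        rw [← Nat.card_coe_set_eq]
        have : Nat.card (R : Set (Fin (6 * m) → ZMod 2)) = Nat.card R := rfl
        rw [this, cardSub R, hR]
      have h3 : (t : Set (Fin (6 * m) → ZMod 2)).ncard = 2 ^ finrank (ZMod 2) t := by
        rw [← Nat.card_coe_set_eq]
        have : Nat.card (t : Set (Fin (6 * m) → ZMod 2)) = Nat.card t := rfl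
        rw [this, cardSub t]
      have h4 := Set.ncard_diff_add_ncard_of_subset
        (show (R : Set (Fin (6 * m) → ZMod 2)) ⊆ t from ht) (Set.toFinite _)
      rw [h1, h2, h3] at *
      omega
    -- the double count
    have hdc : nR * (2 ^ (3 * m) - 2 ^ m) = (2 ^ (6 * m) - 2 ^ m) * M := by
      have eA : Nat.card {q : {T : Submodule (ZMod 2) (Fin (6 * m) → ZMod 2) //
            R ≤ T ∧ finrank (ZMod 2) T = 3 * m} × (Fin (6 * m) → ZMod 2) //
            q.2 ∈ q.1.1 ∧ q.2 ∉ R} = nR * (2 ^ (3 * m) - 2 ^ m) := by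
        rw [Nat.card_congr (Equiv.subtypeProdEquivSigmaSubtype
          (fun (T_R : {T : Submodule (ZMod 2) (Fin (6 * m) → ZMod 2) //
            R ≤ T ∧ finrank (ZMod 2) T = 3 * m}) (v : Fin (6 * m) → ZMod 2) =>
              v ∈ T_R.1 ∧ v ∉ R)), aux_nat_card_sigma]
        have hfib : ∀ T_R : {T : Submodule (ZMod 2) (Fin (6 * m) → ZMod 2) //
            R ≤ T ∧ finrank (ZMod 2) T = 3 * m},
            Nat.card {v : Fin (6 * m) → ZMod 2 // v ∈ T_R.1 ∧ v ∉ R} =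
              2 ^ (3 * m) - 2 ^ m := by
          intro T_R
          have := cardDiffLem T_R.1 T_R.2.1
          rw [T_R.2.2] at this
          omega
        rw [Finset.sum_congr rfl (fun T_R _ => hfib T_R), Finset.sum_const, smul_eq_mul,
          Finset.card_univ, ← Nat.card_eq_fintype_card]
      have eB : Nat.card {q : {T : Submodule (ZMod 2) (Fin (6 * m) → ZMod 2) //
            R ≤ T ∧ finrank (ZMod 2) T = 3 * m} × (Fin (6 * m) → ZMod 2) //
            q.2 ∈ q.1.1 ∧ q.2 ∉ R} = (2 ^ (6 * m) - 2 ^ m) * M := by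
        rw [Nat.card_congr (((Equiv.subtypeEquiv (Equiv.prodComm _ _) (fun q => Iff.rfl) :
            {q : {T : Submodule (ZMod 2) (Fin (6 * m) → ZMod 2) //
              R ≤ T ∧ finrank (ZMod 2) T = 3 * m} × (Fin (6 * m) → ZMod 2) //
                q.2 ∈ q.1.1 ∧ q.2 ∉ R} ≃
            {q : (Fin (6 * m) → ZMod 2) × {T : Submodule (ZMod 2) (Fin (6 * m) → ZMod 2) //
              R ≤ T ∧ finrank (ZMod 2) T = 3 * m} //
                q.1 ∈ q.2.1 ∧ q.1 ∉ R})).trans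
          (Equiv.subtypeProdEquivSigmaSubtype
            (fun (v : Fin (6 * m) → ZMod 2)
              (T_R : {T : Submodule (ZMod 2) (Fin (6 * m) → ZMod 2) //
                R ≤ T ∧ finrank (ZMod 2) T = 3 * m}) => v ∈ T_R.1 ∧ v ∉ R))),
          aux_nat_card_sigma]
        have hfib : ∀ v : Fin (6 * m) → ZMod 2,
            Nat.card {T_R : {T : Submodule (ZMod 2) (Fin (6 * m) → ZMod 2) //
                R ≤ T ∧ finrank (ZMod 2) T = 3 * m} // v ∈ T_R.1 ∧ v ∉ R} =
              if v ∈ R then 0 else M := by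
          intro v
          split_ifs with hvR
          · haveI : IsEmpty {T_R : {T : Submodule (ZMod 2) (Fin (6 * m) → ZMod 2) //
                R ≤ T ∧ finrank (ZMod 2) T = 3 * m} // v ∈ T_R.1 ∧ v ∉ R} :=
              ⟨fun x => x.2.2 hvR⟩
            exact Nat.card_of_isEmpty
          · rw [← fiberM v hvR]
            exact Nat.card_congr (Equiv.subtypeEquivRight (fun T_R => and_iff_left hvR))
        rw [Finset.sum_congr rfl (fun v _ => hfib v), Finset.sum_ite, Finset.sum_const_zero,
          Finset.sum_const, smul_eq_mul, zero_add]
        congr 1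
        have hcompl : (Finset.univ.filter
            (fun v : Fin (6 * m) → ZMod 2 => ¬ v ∈ R)).card =
            Fintype.card {v : Fin (6 * m) → ZMod 2 // ¬ v ∈ R} :=
          (Fintype.card_subtype _).symm
        rw [hcompl, Fintype.card_subtype_compl]
        have hcR : Fintype.card {v : Fin (6 * m) → ZMod 2 // v ∈ R} = 2 ^ m := by
          rw [← Nat.card_eq_fintype_card]
          have : Nat.card {v : Fin (6 * m) → ZMod 2 // v ∈ R} = Nat.card R := rfl
          rw [this, cardSub R, hR]
        have hcW : Fintype.card (Fin (6 * m) → ZMod 2) = 2 ^ (6 * m) := by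
          rw [← Nat.card_eq_fintype_card]
          have : Nat.card (Fin (6 * m) → ZMod 2) = Nat.card (⊤ : Submodule (ZMod 2)
            (Fin (6 * m) → ZMod 2)) := Nat.card_congr (Equiv.subtypeUnivEquiv (by simp)).symm
          rw [this, cardSub, finrank_top, hW]
        rw [hcR, hcW]
      omega
    -- a complement of `R`
    obtain ⟨C, hC⟩ := Submodule.exists_isCompl R
    -- for every admissible `T ⊇ S`, few admissible `T_R` intersect it beyond `R`
    have badT : ∀ T : {T : Submodule (ZMod 2) (Fin (6 * m) → ZMod 2) //
        S ≤ T ∧ finrank (ZMod 2) T = 3 * m},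
        Nat.card {T_R : {T' : Submodule (ZMod 2) (Fin (6 * m) → ZMod 2) //
            R ≤ T' ∧ finrank (ZMod 2) T' = 3 * m} // T.1 ⊓ T_R.1 ≠ R} ≤
          2 ^ (2 * m) * M := by
      intro T
      have hRT : R ≤ T.1 := hRS.trans T.2.1
      have hsup : R ⊔ (T.1 ⊓ C) = T.1 := by
        refine le_antisymm (sup_le hRT inf_le_left) ?_
        intro x hx
        obtain ⟨r, c, hrR, hcC, hxeq⟩ := Submodule.codisjoint_iff_exists_add_eq.mp
          hC.codisjoint x
        have hcT : c ∈ T.1 := by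
          have : c = x - r := by rw [← hxeq]; abel
          rw [this]
          exact sub_mem hx (hRT hrR)
        rw [← hxeq]
        exact Submodule.add_mem_sup hrR (Submodule.mem_inf.mpr ⟨hcT, hcC⟩)
      have hinf : R ⊓ (T.1 ⊓ C) = ⊥ := by
        rw [eq_bot_iff]
        rintro x ⟨hxR, hxTC⟩
        have := Submodule.disjoint_def.mp hC.disjoint x hxR (Submodule.mem_inf.mp hxTC).2
        simp [this]
      have hfr : finrank (ZMod 2) (T.1 ⊓ C : Submodule (ZMod 2) (Fin (6 * m) → ZMod 2)) =
          2 * m := by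
        have h := Submodule.finrank_sup_add_finrank_inf_eq R (T.1 ⊓ C)
        rw [hsup, hinf, finrank_bot, hR, T.2.2] at h
        omega
      have hwit : ∀ T_R : {T_R : {T' : Submodule (ZMod 2) (Fin (6 * m) → ZMod 2) //
          R ≤ T' ∧ finrank (ZMod 2) T' = 3 * m} // T.1 ⊓ T_R.1 ≠ R},
          ∃ a : Fin (6 * m) → ZMod 2, (a ∈ T.1 ⊓ C ∧ a ≠ 0) ∧ a ∈ T_R.1.1 := by
        intro T_R
        have hlt : R < T.1 ⊓ T_R.1.1 :=
          lt_of_le_of_ne (le_inf hRT T_R.1.2.1) (Ne.symm T_R.2)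
        obtain ⟨x, hx, hxR⟩ := SetLike.exists_of_lt hlt
        obtain ⟨hxT, hxTR⟩ := Submodule.mem_inf.mp hx
        obtain ⟨r, c, hrR, hcC, hxeq⟩ := Submodule.codisjoint_iff_exists_add_eq.mp
          hC.codisjoint x
        have hceq : c = x - r := by rw [← hxeq]; abel
        refine ⟨c, ⟨Submodule.mem_inf.mpr ⟨by rw [hceq]; exact sub_mem hxT (hRT hrR), hcC⟩,
          ?_⟩, by rw [hceq]; exact sub_mem hxTR (T_R.1.2.1 hrR)⟩
        rintro rfl
        exact hxR (by rw [← hxeq, add_zero]; exact hrR)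
      let D := {a : Fin (6 * m) → ZMod 2 // a ∈ T.1 ⊓ C ∧ a ≠ 0}
      let f : {T_R : {T' : Submodule (ZMod 2) (Fin (6 * m) → ZMod 2) //
          R ≤ T' ∧ finrank (ZMod 2) T' = 3 * m} // T.1 ⊓ T_R.1 ≠ R} →
          Σ a : D, {T_R' : {T' : Submodule (ZMod 2) (Fin (6 * m) → ZMod 2) //
            R ≤ T' ∧ finrank (ZMod 2) T' = 3 * m} // a.1 ∈ T_R'.1} :=
        fun T_R => ⟨⟨(hwit T_R).choose, (hwit T_R).choose_spec.1⟩,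
          ⟨T_R.1, (hwit T_R).choose_spec.2⟩⟩
      have hinj : Function.Injective f := by
        intro x y h
        have h2 := congrArg (fun z : (Σ a : D, {T_R' : {T' : Submodule (ZMod 2)
            (Fin (6 * m) → ZMod 2) // R ≤ T' ∧ finrank (ZMod 2) T' = 3 * m} //
              a.1 ∈ T_R'.1}) => z.2.1) h
        exact Subtype.ext h2
      calc Nat.card {T_R : {T' : Submodule (ZMod 2) (Fin (6 * m) → ZMod 2) //
              R ≤ T' ∧ finrank (ZMod 2) T' = 3 * m} // T.1 ⊓ T_R.1 ≠ R}
          ≤ Nat.card (Σ a : D, {T_R' : {T' : Submodule (ZMod 2) (Fin (6 * m) → ZMod 2) //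
              R ≤ T' ∧ finrank (ZMod 2) T' = 3 * m} // a.1 ∈ T_R'.1}) :=
            Nat.card_le_card_of_injective f hinj
        _ = ∑ a : D, Nat.card {T_R' : {T' : Submodule (ZMod 2) (Fin (6 * m) → ZMod 2) //
              R ≤ T' ∧ finrank (ZMod 2) T' = 3 * m} // a.1 ∈ T_R'.1} := aux_nat_card_sigma
        _ = ∑ _a : D, M := by
            refine Finset.sum_congr rfl (fun a _ => ?_)
            refine fiberM a.1 (fun haR => ?_)
            exact a.2.2 (Submodule.disjoint_def.mp hC.disjoint a.1 haR
              (Submodule.mem_inf.mp a.2.1).2)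
        _ = Fintype.card D * M := by rw [Finset.sum_const, smul_eq_mul, Finset.card_univ]
        _ ≤ 2 ^ (2 * m) * M := by
            have hD : Fintype.card D ≤ 2 ^ (2 * m) := by
              have hinj2 : Function.Injective
                  (fun a : D => (⟨a.1, a.2.1⟩ : ↥(T.1 ⊓ C))) := by
                intro a b hab
                have h' : (⟨a.1, a.2.1⟩ : ↥(T.1 ⊓ C)) = ⟨b.1, b.2.1⟩ := hab
                have h'' : a.1 = b.1 := Subtype.mk_eq_mk.mp h'
                exact Subtype.ext h''
              calc Fintype.card D ≤ Fintype.card (T.1 ⊓ C :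
                    Submodule (ZMod 2) (Fin (6 * m) → ZMod 2)) :=
                  Fintype.card_le_of_injective _ hinj2
                _ = 2 ^ (2 * m) := by
                    rw [← Nat.card_eq_fintype_card, cardSub, hfr]
            exact Nat.mul_le_mul_right M hD
    -- total number of bad pairs
    have hbad : Nat.card {p : {T : Submodule (ZMod 2) (Fin (6 * m) → ZMod 2) //
          S ≤ T ∧ finrank (ZMod 2) T = 3 * m} ×
        {T : Submodule (ZMod 2) (Fin (6 * m) → ZMod 2) //
          R ≤ T ∧ finrank (ZMod 2) T = 3 * m} // ¬ p.1.1 ⊓ p.2.1 = R} ≤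
        nS * (2 ^ (2 * m) * M) := by
      rw [Nat.card_congr (Equiv.subtypeProdEquivSigmaSubtype
        (fun (T : {T : Submodule (ZMod 2) (Fin (6 * m) → ZMod 2) //
            S ≤ T ∧ finrank (ZMod 2) T = 3 * m})
          (T_R : {T : Submodule (ZMod 2) (Fin (6 * m) → ZMod 2) //
            R ≤ T ∧ finrank (ZMod 2) T = 3 * m}) => ¬ T.1 ⊓ T_R.1 = R)),
        aux_nat_card_sigma]
      calc _ ≤ ∑ _T : {T : Submodule (ZMod 2) (Fin (6 * m) → ZMod 2) //
              S ≤ T ∧ finrank (ZMod 2) T = 3 * m}, 2 ^ (2 * m) * M :=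
            Finset.sum_le_sum (fun T _ => badT T)
        _ = nS * (2 ^ (2 * m) * M) := by
            rw [Finset.sum_const, smul_eq_mul, Finset.card_univ, ← Nat.card_eq_fintype_card]
    -- good pairs plus bad pairs make all pairs
    have htot : G + Nat.card {p : {T : Submodule (ZMod 2) (Fin (6 * m) → ZMod 2) //
          S ≤ T ∧ finrank (ZMod 2) T = 3 * m} ×
        {T : Submodule (ZMod 2) (Fin (6 * m) → ZMod 2) //
          R ≤ T ∧ finrank (ZMod 2) T = 3 * m} // ¬ p.1.1 ⊓ p.2.1 = R} = nS * nR := by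
      rw [hG, hnS, hnR, ← Nat.card_prod, ← Nat.card_sum]
      exact Nat.card_congr (Equiv.sumCompl
        (fun p : {T : Submodule (ZMod 2) (Fin (6 * m) → ZMod 2) //
            S ≤ T ∧ finrank (ZMod 2) T = 3 * m} ×
          {T : Submodule (ZMod 2) (Fin (6 * m) → ZMod 2) //
            R ≤ T ∧ finrank (ZMod 2) T = 3 * m} => p.1.1 ⊓ p.2.1 = R))
    -- now the arithmetic
    set bad := Nat.card {p : {T : Submodule (ZMod 2) (Fin (6 * m) → ZMod 2) //
          S ≤ T ∧ finrank (ZMod 2) T = 3 * m} ×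
        {T : Submodule (ZMod 2) (Fin (6 * m) → ZMod 2) //
          R ≤ T ∧ finrank (ZMod 2) T = 3 * m} // ¬ p.1.1 ⊓ p.2.1 = R} with hbaddef
    have h3m : (2:ℕ) ^ m ≤ 2 ^ (3 * m) := Nat.pow_le_pow_right (by norm_num) (by omega)
    have h6m : (2:ℕ) ^ m ≤ 2 ^ (6 * m) := Nat.pow_le_pow_right (by norm_num) (by omega)
    have hdcq : (nR:ℚ) * ((2:ℚ) ^ (3 * m) - 2 ^ m) = ((2:ℚ) ^ (6 * m) - 2 ^ m) * M := by
      have h := congrArg (Nat.cast : ℕ → ℚ) hdc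
      rw [Nat.cast_mul, Nat.cast_mul, Nat.cast_sub h3m, Nat.cast_sub h6m] at h
      push_cast at h
      convert h using 2 <;> push_cast <;> ring
    have hGq : (G:ℚ) = (nS:ℚ) * nR - bad := by
      have h := congrArg (Nat.cast : ℕ → ℚ) htot
      push_cast at h
      linarith
    have hbadq : (bad:ℚ) ≤ (nS:ℚ) * (2 ^ (2 * m) * M) := by exact_mod_cast hbad
    have hx2 : (2:ℚ) ≤ (2:ℚ) ^ m := by
      calc (2:ℚ) = 2 ^ 1 := (pow_one 2).symm
        _ ≤ 2 ^ m := by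
          apply pow_le_pow_right₀ (by norm_num) (by omega)
    have hx0 : (0:ℚ) < 2 ^ m := by positivity
    have hDq : (0:ℚ) < (2:ℚ) ^ (6 * m) - 2 ^ m := by
      have : (2:ℚ) ^ m < 2 ^ (6 * m) := by
        apply pow_lt_pow_right₀ (by norm_num) (by omega)
      linarith
    have hscal : (2:ℚ) ^ (3 * m) * ((2:ℚ) ^ (3 * m) - 2 ^ m) ≤
        2 * ((2:ℚ) ^ (6 * m) - 2 ^ m) := by
      have e3 : (2:ℚ) ^ (3 * m) = ((2:ℚ) ^ m) ^ 3 := by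
        rw [← pow_mul, mul_comm 3 m]
      have e6 : (2:ℚ) ^ (6 * m) = ((2:ℚ) ^ m) ^ 6 := by
        rw [← pow_mul, mul_comm 6 m]
      rw [e3, e6]
      set x : ℚ := (2:ℚ) ^ m
      nlinarith [hx2, hx0, sq_nonneg x, sq_nonneg (x - 1), pow_pos hx0 2, pow_pos hx0 3,
        pow_pos hx0 4, mul_le_mul_of_nonneg_left hx2 (le_of_lt (pow_pos hx0 3))]
    have hprod : (0:ℚ) < (nS:ℚ) * nR := by
      have h1 : (0:ℚ) < (nS:ℚ) := by exact_mod_cast hnSpos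
      have h2 : (0:ℚ) < (nR:ℚ) := by exact_mod_cast hnRpos
      positivity
    have key : (bad:ℚ) * 2 ^ m ≤ 2 * ((nS:ℚ) * nR) := by
      rw [← mul_le_mul_iff_of_pos_right hDq]
      have e23 : (2:ℚ) ^ (2 * m) * 2 ^ m = 2 ^ (3 * m) := by
        rw [← pow_add]
        congr 1
        omega
      calc (bad:ℚ) * 2 ^ m * ((2:ℚ) ^ (6 * m) - 2 ^ m)
          ≤ ((nS:ℚ) * (2 ^ (2 * m) * M)) * 2 ^ m * ((2:ℚ) ^ (6 * m) - 2 ^ m) := by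
            apply mul_le_mul_of_nonneg_right (mul_le_mul_of_nonneg_right hbadq (by positivity))
              (le_of_lt hDq)
        _ = (nS:ℚ) * ((2:ℚ) ^ (2 * m) * 2 ^ m) * (((2:ℚ) ^ (6 * m) - 2 ^ m) * M) := by ring
        _ = (nS:ℚ) * ((2:ℚ) ^ (2 * m) * 2 ^ m) * ((nR:ℚ) * ((2:ℚ) ^ (3 * m) - 2 ^ m)) := by
            rw [← hdcq]
        _ = (nS:ℚ) * nR * ((2 ^ (2 * m) * 2 ^ m) * ((2:ℚ) ^ (3 * m) - 2 ^ m)) := by ring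
        _ = (nS:ℚ) * nR * (2 ^ (3 * m) * ((2:ℚ) ^ (3 * m) - 2 ^ m)) := by rw [e23]
        _ ≤ (nS:ℚ) * nR * (2 * ((2:ℚ) ^ (6 * m) - 2 ^ m)) :=
            mul_le_mul_of_nonneg_left hscal (le_of_lt hprod)
        _ = 2 * ((nS:ℚ) * nR) * ((2:ℚ) ^ (6 * m) - 2 ^ m) := by ring
    have heps : (2:ℚ) ^ (-(m:ℤ) + 1) = 2 / 2 ^ m := by
      rw [zpow_add₀ (by norm_num : (2:ℚ) ≠ 0), zpow_neg, zpow_natCast, zpow_one]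
      ring
    rw [le_div_iff₀ hprod, heps, hGq]
    have hb2 : (bad:ℚ) ≤ 2 / 2 ^ m * ((nS:ℚ) * nR) := by
      rw [div_mul_eq_mul_div, le_div_iff₀ hx0]
      linarith [key]
    have expand : (1 - 2 / 2 ^ m) * ((nS:ℚ) * nR) =
        (nS:ℚ) * nR - 2 / 2 ^ m * ((nS:ℚ) * nR) := by ring
    linarith [hb2, expand]
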